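/- Let f~_G and f~_{K_n} denote the restrictions to V_e^{(I_1)} of the edge functions of G and of the complete graph K_n on V(G), and let p in V_e^{(I_1)} be a regular point of both G and K_n in V_e^{(I_1)}. Then rank d f~_G(p) ≤ rank d f~_{K_n}(p), and equality holds if and only if there exists a neighborhood N_p of p in V_e^{(I_1)} with f~_{K_n}^{-1}(f~_{K_n}(p)) ∩ N_p = f~_G^{-1}(f~_G(p)) ∩ N_p. -/

import Mathlib

/-- The external representation matrix `H_e(x)`. -/
def externalRep (n d : ℕ) {S : Type*} [Group S] (M : S → Matrix (Fin d) (Fin d) ℝ)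
    (π : S → Equiv.Perm (Fin n)) (x : S) :
    Matrix (Fin n × Fin d) (Fin n × Fin d) ℝ :=
  Matrix.of fun ka lb => if lb.1 = (π x)⁻¹ ka.1 then M x ka.2 lb.2 else 0

/-- The fixed subspace `V_e^{(I_1)}` of the external representation. -/
def fixedSubspace (n d : ℕ) {S : Type*} [Group S] (M : S → Matrix (Fin d) (Fin d) ℝ)
    (π : S → Equiv.Perm (Fin n)) : Submodule ℝ (Fin n × Fin d → ℝ) :=
  ⨅ x : S, LinearMap.ker ((externalRep n d M π x).mulVecLin - LinearMap.id)

/-- The edge set of the complete graph on `Fin n`. -/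
def completeEdges (n : ℕ) : Finset (Fin n × Fin n) :=
  Finset.univ.filter fun e => e.1 ≠ e.2

/-- The restriction `f~_G` of the edge function of `G` to a subspace. -/
def resEdgeFunction (n d : ℕ) (E : Finset (Fin n × Fin n))
    (V₁ : Submodule ℝ (Fin n × Fin d → ℝ)) : V₁ → (E → ℝ) :=
  fun q e => ∑ a : Fin d, ((q : Fin n × Fin d → ℝ) (e.1.1, a) -
    (q : Fin n × Fin d → ℝ) (e.1.2, a)) ^ 2

/-- The rank of the differential of `f` at `q`. -/
noncomputable def dRank {X Y : Type*} [NormedAddCommGroup X] [NormedSpace ℝ X]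
    [NormedAddCommGroup Y] [NormedSpace ℝ Y] (f : X → Y) (q : X) : ℕ :=
  Module.finrank ℝ (LinearMap.range ((fderiv ℝ f q) : X →ₗ[ℝ] Y))


section AuxLemmas

open Filter Topology Module LinearMap Function Metric

variable {X Y Z : Type*} [NormedAddCommGroup X] [NormedSpace ℝ X] [FiniteDimensional ℝ X]
  [NormedAddCommGroup Y] [NormedSpace ℝ Y] [FiniteDimensional ℝ Y]
  [NormedAddCommGroup Z] [NormedSpace ℝ Z] [FiniteDimensional ℝ Z]

set_option linter.unusedSectionVars false

theorem aux_rank_lsc {W : Type*} [TopologicalSpace W] (T : W → (X →L[ℝ] Y))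
    (hT : Continuous T) (w₀ : W) :
    ∀ᶠ w in 𝓝 w₀, finrank ℝ (LinearMap.range ((T w₀) : X →ₗ[ℝ] Y)) ≤
      finrank ℝ (LinearMap.range ((T w) : X →ₗ[ℝ] Y)) := by
  set r := finrank ℝ (LinearMap.range ((T w₀) : X →ₗ[ℝ] Y)) with hr
  have b := Module.finBasis ℝ ↥(LinearMap.range ((T w₀) : X →ₗ[ℝ] Y))
  rw [← hr] at b
  have hv : ∀ i : Fin r, ∃ x : X, T w₀ x = (b i : Y) := fun i =>
    LinearMap.mem_range.1 (b i).2
  choose v hv using hv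
  have hindep : LinearIndependent ℝ fun i => T w₀ (v i) := by
    have : (fun i => T w₀ (v i)) = fun i => ((b i : Y)) := funext fun i => hv i
    rw [this]
    exact b.linearIndependent.map' _ (Submodule.ker_subtype _)
  have hcont : Continuous fun w => fun i : Fin r => T w (v i) :=
    continuous_pi fun i => hT.clm_apply continuous_const
  have hopen : IsOpen {y : Fin r → Y | LinearIndependent ℝ y} := isOpen_setOf_linearIndependent
  filter_upwards [(hopen.preimage hcont).mem_nhds hindep] with w hw
  calc r = finrank ℝ (Submodule.span ℝ (Set.range fun i => T w (v i))) :=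
        (finrank_span_eq_card hw).symm ▸ (by simp)
    _ ≤ finrank ℝ (LinearMap.range ((T w) : X →ₗ[ℝ] Y)) := by
        apply Submodule.finrank_mono
        rw [Submodule.span_le]
        rintro y ⟨i, rfl⟩
        exact LinearMap.mem_range.2 ⟨v i, rfl⟩


set_option maxHeartbeats 2000000 in
set_option synthInstance.maxHeartbeats 500000 in
theorem aux_key (f : X → Y) (g : X → Z) (hf : ContDiff ℝ ⊤ f) (hg : ContDiff ℝ ⊤ g) (p : X)
    (hU : ∀ᶠ q in 𝓝 p, Function.Surjective (fderiv ℝ g q) ∧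
      LinearMap.ker ((fderiv ℝ g q : X →ₗ[ℝ] Z)) ≤ LinearMap.ker ((fderiv ℝ f q : X →ₗ[ℝ] Y))) :
    (∃ N ∈ 𝓝 p, ∀ q ∈ N, g q = g p → f q = f p) ∧
    ∀ v ∈ LinearMap.ker ((fderiv ℝ g p : X →ₗ[ℝ] Z)), ∃ γ : ℝ → X, γ 0 = p ∧ HasDerivAt γ v 0 ∧
      ∀ᶠ t in 𝓝 0, g (γ t) = g p := by
  have hdifff : Differentiable ℝ f := hf.differentiable (by simp)
  have hdiffg : Differentiable ℝ g := hg.differentiable (by simp)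
  obtain ⟨hsurjp, hkerp⟩ := hU.self_of_nhds
  set K : Submodule ℝ X := LinearMap.ker ((fderiv ℝ g p : X →ₗ[ℝ] Z)) with hK
  obtain ⟨K', hcompl⟩ := Submodule.exists_isCompl K
  set π : X →L[ℝ] K := LinearMap.toContinuousLinearMap (K.linearProjOfIsCompl K' hcompl) with hπ
  have hπ_left : ∀ v : X, ∀ hv : v ∈ K, π v = ⟨v, hv⟩ := by
    intro v hv
    simp only [hπ, LinearMap.coe_toContinuousLinearMap']
    exact Submodule.linearProjOfIsCompl_apply_left hcompl ⟨v, hv⟩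
  set Φ : X → (X →L[ℝ] Z × ↥K) := fun q => (fderiv ℝ g q).prod π with hΦ
  set φ : X → Z × ↥K := fun x => (g x, π x) with hφdef
  have hφdiff : ∀ x, HasFDerivAt φ (Φ x) x := fun x =>
    (hdiffg x).hasFDerivAt.prodMk π.hasFDerivAt
  have hφC : ContDiff ℝ ⊤ φ := hg.prodMk π.contDiff
  -- Φ is continuous
  have hΦcont : Continuous Φ := by
    have h1 : Continuous (fderiv ℝ g) := hg.continuous_fderiv (by simp)
    have : Φ = fun q => (ContinuousLinearMap.compL ℝ X Z (Z × ↥K)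
        (ContinuousLinearMap.inl ℝ Z ↥K)) (fderiv ℝ g q) +
        (ContinuousLinearMap.inr ℝ Z ↥K).comp π := by
      funext q; ext x <;> simp [hΦ]
    rw [this]
    exact ((ContinuousLinearMap.compL ℝ X Z (Z × ↥K)
        (ContinuousLinearMap.inl ℝ Z ↥K)).continuous.comp h1).add continuous_const
  -- Φ p is bijective
  have hΦp_inj : Function.Injective (Φ p) := by
    intro a b hab
    have h1 : fderiv ℝ g p a = fderiv ℝ g p b := congrArg Prod.fst hab
    have h2 : π a = π b := congrArg Prod.snd hab
    have hab' : a - b ∈ K := by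
      simp [hK, LinearMap.mem_ker, map_sub, sub_eq_zero, h1]
    have h3 := hπ_left (a - b) hab'
    rw [map_sub, h2, sub_self] at h3
    exact sub_eq_zero.mp (congrArg Subtype.val h3).symm
  have hdim : finrank ℝ X = finrank ℝ (Z × ↥K) := by
    have h1 := LinearMap.finrank_range_add_finrank_ker ((fderiv ℝ g p : X →ₗ[ℝ] Z))
    have h2 : LinearMap.range ((fderiv ℝ g p) : X →ₗ[ℝ] Z) = ⊤ :=
      LinearMap.range_eq_top.2 hsurjp
    rw [h2, finrank_top] at h1
    rw [Module.finrank_prod]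
    have h3 : finrank ℝ ↥K = finrank ℝ ↥(LinearMap.ker ((fderiv ℝ g p : X →ₗ[ℝ] Z))) := rfl
    omega
  -- bijectivity of Φ q from injectivity plus rank
  have hbij : ∀ q, Function.Injective (Φ q) → Function.Bijective (Φ q) := by
    intro q hinj
    refine ⟨hinj, ?_⟩
    have h1 := LinearMap.finrank_range_add_finrank_ker ((Φ q : X →ₗ[ℝ] Z × ↥K))
    have hker0 : LinearMap.ker ((Φ q : X →ₗ[ℝ] Z × ↥K)) = ⊥ :=
      LinearMap.ker_eq_bot.2 hinj
    rw [hker0, finrank_bot, add_zero, hdim] at h1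
    have h2 : LinearMap.range ((Φ q : X →ₗ[ℝ] Z × ↥K)) = ⊤ :=
      Submodule.eq_top_of_finrank_eq h1
    exact LinearMap.range_eq_top.1 h2
  -- eventually, Φ q is bijective
  have hev_bij : ∀ᶠ q in 𝓝 p, Function.Bijective (Φ q) := by
    have hfr : finrank ℝ (LinearMap.range ((Φ p) : X →ₗ[ℝ] Z × ↥K)) = finrank ℝ X := by
      have hker0 : LinearMap.ker ((Φ p : X →ₗ[ℝ] Z × ↥K)) = ⊥ :=
        LinearMap.ker_eq_bot.2 hΦp_inj
      have h1 := LinearMap.finrank_range_add_finrank_ker ((Φ p : X →ₗ[ℝ] Z × ↥K))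
      rw [hker0, finrank_bot, add_zero] at h1
      exact h1
    filter_upwards [aux_rank_lsc Φ hΦcont p] with q hq
    apply hbij
    rw [hfr] at hq
    have h1 := LinearMap.finrank_range_add_finrank_ker ((Φ q : X →ₗ[ℝ] Z × ↥K))
    have : finrank ℝ (LinearMap.ker ((Φ q : X →ₗ[ℝ] Z × ↥K))) = 0 := by omega
    have hker0 : LinearMap.ker ((Φ q : X →ₗ[ℝ] Z × ↥K)) = ⊥ :=
      Submodule.finrank_eq_zero.1 this
    exact LinearMap.ker_eq_bot.1 hker0
  -- good open set
  obtain ⟨U', hU'open, hpU', hU'⟩ : ∃ U', IsOpen U' ∧ p ∈ U' ∧ ∀ q ∈ U',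
      Function.Bijective (Φ q) ∧ Function.Surjective (fderiv ℝ g q) ∧
        LinearMap.ker ((fderiv ℝ g q : X →ₗ[ℝ] Z)) ≤ LinearMap.ker ((fderiv ℝ f q : X →ₗ[ℝ] Y)) := by
    obtain ⟨U', hmem, h⟩ := eventually_iff_exists_mem.1 (hev_bij.and hU)
    rcases _root_.mem_nhds_iff.1 hmem with ⟨V, hVU, hVopen, hpV⟩
    exact ⟨V, hVopen, hpV, fun q hq => ⟨(h q (hVU hq)).1, (h q (hVU hq)).2.1, (h q (hVU hq)).2.2⟩⟩
  -- the equivalence at p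
  have mkE : ∀ q, Function.Bijective (Φ q) → { E : X ≃L[ℝ] Z × ↥K // (E : X → Z × ↥K) = Φ q } := by
    intro q hq
    refine ⟨(LinearEquiv.ofBijective ((Φ q : X →ₗ[ℝ] Z × ↥K)) hq).toContinuousLinearEquiv, ?_⟩
    rw [LinearEquiv.coe_toContinuousLinearEquiv']
    rfl
  obtain ⟨e, he⟩ := mkE p (hbij p hΦp_inj)
  have hstrict : HasStrictFDerivAt φ (e : X →L[ℝ] Z × ↥K) p := by
    apply (hφC.contDiffAt).hasStrictFDerivAt' _ (by simp)
    have : ((e : X →L[ℝ] Z × ↥K) : X → Z × ↥K) = Φ p := he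
    rw [show (e : X →L[ℝ] Z × ↥K) = Φ p from ContinuousLinearMap.ext fun x => congrFun this x]
    exact hφdiff p
  set Ψ := hstrict.toOpenPartialHomeomorph φ with hΨ
  have hΨcoe : (Ψ : X → Z × ↥K) = φ := rfl
  have hpsource : p ∈ Ψ.source := hstrict.mem_toOpenPartialHomeomorph_source
  set ψ := Ψ.symm with hψ
  -- differentiability of ψ with controlled derivative on the target ∩ ψ ⁻¹' U'
  have hψdiff : ∀ y ∈ Ψ.target ∩ ψ ⁻¹' U', ∃ E : X ≃L[ℝ] Z × ↥K,
      (E : X → Z × ↥K) = Φ (ψ y) ∧ HasFDerivAt ψ (E.symm : Z × ↥K →L[ℝ] X) y := by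
    rintro y ⟨hyt, hyU⟩
    obtain ⟨E, hE⟩ := mkE (ψ y) (hU' _ hyU).1
    refine ⟨E, hE, ?_⟩
    have hfd : HasFDerivAt φ (E : X →L[ℝ] Z × ↥K) (ψ y) := by
      rw [show (E : X →L[ℝ] Z × ↥K) = Φ (ψ y) from
        ContinuousLinearMap.ext fun x => congrFun hE x]
      exact hφdiff (ψ y)
    apply hfd.of_local_left_inverse (Ψ.continuousAt_symm hyt)
    filter_upwards [Ψ.open_target.mem_nhds hyt] with y' hy'
    exact Ψ.right_inv hy'
  -- choose ball
  obtain ⟨ε, hε, hball⟩ : ∃ ε > 0, ball (φ p) ε ⊆ Ψ.target ∩ ψ ⁻¹' U' := by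
    have hopen : IsOpen (Ψ.target ∩ ψ ⁻¹' U') := Ψ.isOpen_inter_preimage_symm hU'open
    have hmem : φ p ∈ Ψ.target ∩ ψ ⁻¹' U' := by
      constructor
      · exact hstrict.image_mem_toOpenPartialHomeomorph_target
      · have : ψ (φ p) = p := Ψ.left_inv hpsource
        simp only [Set.mem_preimage, this]
        exact hpU'
    exact (Metric.isOpen_iff.1 hopen) _ hmem
  -- f ∘ ψ depends only on the first coordinate within the ball
  have hconst : ∀ u : Z, ∀ w₁ w₂ : ↥K, (u, w₁) ∈ ball (φ p) ε → (u, w₂) ∈ ball (φ p) ε →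
      f (ψ (u, w₁)) = f (ψ (u, w₂)) := by
    intro u w₁ w₂ h₁ h₂
    set s' : Set ↥K := {w | (u, w) ∈ ball (φ p) ε} with hs'
    have hconv : Convex ℝ s' := by
      intro a ha b hb ta tb hta htb htab
      have hcb := (convex_ball (φ p) ε) ha hb hta htb htab
      have heq : (ta • ((u, a) : Z × ↥K) + tb • (u, b)) = (u, ta • a + tb • b) := by
        have h5 : ta • u + tb • u = u := by rw [← add_smul, htab, one_smul]
        simp [Prod.ext_iff, h5]
      show (u, ta • a + tb • b) ∈ ball (φ p) ε
      rwa [heq] at hcb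
    have hG : ∀ w ∈ s', HasFDerivWithinAt (fun w : ↥K => f (ψ (u, w)))
        ((0 : ↥K →L[ℝ] Y)) s' w := by
      intro w hw
      obtain ⟨E, hEcoe, hEdiff⟩ := hψdiff (u, w) (hball hw)
      have hmemU : ψ (u, w) ∈ U' := (hball hw).2
      have hincl : HasFDerivAt (fun w : ↥K => ((u, w) : Z × ↥K))
          (ContinuousLinearMap.inr ℝ Z ↥K) w := by
        exact ((hasFDerivAt_const u w).prodMk (hasFDerivAt_id w))
      have hcomp : HasFDerivAt (fun w : ↥K => f (ψ (u, w)))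
          (((fderiv ℝ f (ψ (u, w))).comp (E.symm : Z × ↥K →L[ℝ] X)).comp
            (ContinuousLinearMap.inr ℝ Z ↥K)) w :=
        (((hdifff (ψ (u, w))).hasFDerivAt.comp _ hEdiff).comp w hincl)
      have hzero : (((fderiv ℝ f (ψ (u, w))).comp (E.symm : Z × ↥K →L[ℝ] X)).comp
          (ContinuousLinearMap.inr ℝ Z ↥K)) = 0 := by
        ext w'
        simp only [ContinuousLinearMap.comp_apply, ContinuousLinearMap.inr_apply,
          ContinuousLinearMap.zero_apply]
        have hkmem : E.symm (0, w') ∈ LinearMap.ker ((fderiv ℝ g (ψ (u, w)) : X →ₗ[ℝ] Z)) := by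
          have hap : Φ (ψ (u, w)) (E.symm (0, w')) = ((0 : Z), w') := by
            rw [← congrFun hEcoe]; exact E.apply_symm_apply _
          have hap1 := congrArg Prod.fst hap
          simp only [hΦ, ContinuousLinearMap.prod_apply] at hap1
          simpa [LinearMap.mem_ker] using hap1
        exact (hU' _ hmemU).2.2 hkmem
      rw [← hzero]
      exact hcomp.hasFDerivWithinAt
    have hbound : ∀ w ∈ s', ‖(0 : ↥K →L[ℝ] Y)‖ ≤ 0 := fun w _ => le_of_eq ContinuousLinearMap.opNorm_zero
    have hest := hconv.norm_image_sub_le_of_norm_hasFDerivWithin_le hG hbound h₂ h₁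
    simpa [sub_eq_zero] using hest
  constructor
  · -- part (A)
    refine ⟨Ψ.source ∩ φ ⁻¹' (ball (φ p) ε), ?_, ?_⟩
    · exact Filter.inter_mem (Ψ.open_source.mem_nhds hpsource)
        (hφC.continuous.continuousAt.preimage_mem_nhds (ball_mem_nhds _ hε))
    · rintro q ⟨hqs, hqb⟩ hgq
      have h1 : ψ (φ q) = q := Ψ.left_inv hqs
      have h2 : ψ (φ p) = p := Ψ.left_inv hpsource
      have hq' : ((g p, π q) : Z × ↥K) ∈ ball (φ p) ε := by
        rw [← hgq]; exact hqb
      have hp' : ((g p, π p) : Z × ↥K) ∈ ball (φ p) ε := mem_ball_self hε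
      calc f q = f (ψ (g p, π q)) := by
            rw [show ((g p, π q) : Z × ↥K) = φ q by rw [hφdef]; simp [hgq], h1]
        _ = f (ψ (g p, π p)) := hconst _ _ _ hq' hp'
        _ = f p := by rw [show ((g p, π p) : Z × ↥K) = φ p from rfl, h2]
  · -- part (B)
    intro v hv
    have hmemt : φ p ∈ Ψ.target ∩ ψ ⁻¹' U' := by
      refine ⟨hstrict.image_mem_toOpenPartialHomeomorph_target, ?_⟩
      have h2 : ψ (φ p) = p := Ψ.left_inv hpsource
      simp only [Set.mem_preimage, h2]
      exact hpU'
    obtain ⟨E, hEcoe, hEdiff⟩ := hψdiff (φ p) hmemt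
    have hl : (ψ : Z × ↥K → X) (φ p) = p := by
      rw [← hΨcoe]; exact Ψ.left_inv hpsource
    rw [hl] at hEcoe
    set z₀ : Z × ↥K := ((0 : Z), (⟨v, hv⟩ : ↥K)) with hz₀
    set c : ℝ → Z × ↥K := fun t => φ p + t • z₀ with hc
    have hc0 : c 0 = φ p := by simp [hc]
    have hcd : HasDerivAt c z₀ 0 := by
      simpa [hc] using (((hasDerivAt_id (0:ℝ)).smul_const z₀).const_add (φ p))
    have hE0 : (E.symm : Z × ↥K →L[ℝ] X) z₀ = v := by
      have hEv : E v = z₀ := by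
        have h3 : E v = Φ p v := congrFun hEcoe v
        rw [h3]
        simp only [hΦ, ContinuousLinearMap.prod_apply]
        have h4 : fderiv ℝ g p v = 0 := hv
        rw [h4, hπ_left v hv]
      show E.symm z₀ = v
      rw [← hEv, E.symm_apply_apply]
    refine ⟨fun t => ψ (c t), ?_, ?_, ?_⟩
    · show (ψ : Z × ↥K → X) (c 0) = p
      rw [hc0]; exact hl
    · have h1 : HasDerivAt (fun t => ψ (c t)) ((E.symm : Z × ↥K →L[ℝ] X) z₀) 0 := by
        apply HasFDerivAt.comp_hasDerivAt
        · rw [hc0]; exact hEdiff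
        · exact hcd
      rwa [hE0] at h1
    · have hev : ∀ᶠ t in 𝓝 (0:ℝ), c t ∈ ball (φ p) ε := by
        have : ContinuousAt c 0 := hcd.continuousAt
        have hmem : ball (φ p) ε ∈ 𝓝 (c 0) := by rw [hc0]; exact ball_mem_nhds _ hε
        exact this.preimage_mem_nhds hmem
      filter_upwards [hev] with t ht
      have htarget : c t ∈ Ψ.target := (hball ht).1
      have hri : φ (ψ (c t)) = c t := Ψ.right_inv htarget
      have := congrArg Prod.fst hri
      simp only [hφdef] at this
      rw [this]
      simp [hc, hz₀, hφdef]


end AuxLemmas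

open Filter Topology Module LinearMap Function Metric in
theorem resEdge_contDiff (n d : ℕ) (E : Finset (Fin n × Fin n))
    (V₁ : Submodule ℝ (Fin n × Fin d → ℝ)) :
    ContDiff ℝ ⊤ (resEdgeFunction n d E V₁) := by
  apply contDiff_pi.2
  intro e
  apply ContDiff.sum
  intro a _
  have h1 : ContDiff ℝ ⊤ (fun q : ↥V₁ => (q : Fin n × Fin d → ℝ) (e.1.1, a)) :=
    (ContinuousLinearMap.proj (e.1.1, a) :
      (Fin n × Fin d → ℝ) →L[ℝ] ℝ).contDiff.comp V₁.subtypeL.contDiff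
  have h2 : ContDiff ℝ ⊤ (fun q : ↥V₁ => (q : Fin n × Fin d → ℝ) (e.1.2, a)) :=
    (ContinuousLinearMap.proj (e.1.2, a) :
      (Fin n × Fin d → ℝ) →L[ℝ] ℝ).contDiff.comp V₁.subtypeL.contDiff
  exact (h1.sub h2).pow 2



open Filter Topology Module LinearMap Function Metric in
theorem dRank_eq {X Y : Type*} [NormedAddCommGroup X] [NormedSpace ℝ X]
    [NormedAddCommGroup Y] [NormedSpace ℝ Y] (f : X → Y) (q : X) :
    dRank f q = finrank ℝ (LinearMap.range ((fderiv ℝ f q) : X →ₗ[ℝ] Y)) := rfl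

theorem ker_coe_eq {X Y : Type*} [NormedAddCommGroup X] [NormedSpace ℝ X]
    [NormedAddCommGroup Y] [NormedSpace ℝ Y] (T : X →L[ℝ] Y) :
    LinearMap.ker ((T : X →ₗ[ℝ] Y)) = LinearMap.ker (T : X →ₗ[ℝ] Y) := rfl

open Filter Topology Module LinearMap Function Metric in
set_option maxHeartbeats 1000000 in
/-- if `p ∈ V_e^{(I_1)}` is a regular point of both `G` and `K_n` in
`V_e^{(I_1)}`, then `rank d f~_G(p) ≤ rank d f~_{K_n}(p)`, with equality iff the
level sets of `f~_G` and `f~_{K_n}` through `p` agree on some neighborhood of `p`. -/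
theorem rank_le_and_eq_iff_level_sets_agree
    (n d : ℕ) (EG : Finset (Fin n × Fin n)) (hEG : EG ⊆ completeEdges n)
    {S : Type*} [Group S] [Fintype S]
    (M : S → Matrix (Fin d) (Fin d) ℝ) (π : S → Equiv.Perm (Fin n))
    (p : fixedSubspace n d M π)
    (hregG : ∃ U ∈ nhds p, ∀ q ∈ U,
      dRank (resEdgeFunction n d EG (fixedSubspace n d M π)) q ≤
        dRank (resEdgeFunction n d EG (fixedSubspace n d M π)) p)
    (hregK : ∃ U ∈ nhds p, ∀ q ∈ U,
      dRank (resEdgeFunction n d (completeEdges n) (fixedSubspace n d M π)) q ≤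
        dRank (resEdgeFunction n d (completeEdges n) (fixedSubspace n d M π)) p) :
    dRank (resEdgeFunction n d EG (fixedSubspace n d M π)) p ≤
      dRank (resEdgeFunction n d (completeEdges n) (fixedSubspace n d M π)) p ∧
    (dRank (resEdgeFunction n d EG (fixedSubspace n d M π)) p =
        dRank (resEdgeFunction n d (completeEdges n) (fixedSubspace n d M π)) p ↔
      ∃ N ∈ nhds p, ∀ q ∈ N,
        (resEdgeFunction n d (completeEdges n) (fixedSubspace n d M π) q =
            resEdgeFunction n d (completeEdges n) (fixedSubspace n d M π) p ↔
          resEdgeFunction n d EG (fixedSubspace n d M π) q =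
            resEdgeFunction n d EG (fixedSubspace n d M π) p)) := by
  classical
  set fK := resEdgeFunction n d (completeEdges n) (fixedSubspace n d M π) with hfKdef
  set fG := resEdgeFunction n d EG (fixedSubspace n d M π) with hfGdef
  have hCK : ContDiff ℝ ⊤ fK := resEdge_contDiff n d (completeEdges n) _
  have hCG : ContDiff ℝ ⊤ fG := resEdge_contDiff n d EG _
  -- the restriction linear map
  set L : ({x : Fin n × Fin n // x ∈ completeEdges n} → ℝ) →L[ℝ]
      ({x : Fin n × Fin n // x ∈ EG} → ℝ) :=
    LinearMap.toContinuousLinearMap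
      { toFun := fun v e => v (⟨e.1, hEG e.2⟩ : {x : Fin n × Fin n // x ∈ completeEdges n})
        map_add' := fun _ _ => rfl
        map_smul' := fun _ _ => rfl } with hL
  have hLapp : ∀ (v : {x : Fin n × Fin n // x ∈ completeEdges n} → ℝ)
      (e : {x : Fin n × Fin n // x ∈ EG}),
      L v e = v (⟨e.1, hEG e.2⟩ : {x : Fin n × Fin n // x ∈ completeEdges n}) := by
    intro v e
    simp only [hL, LinearMap.coe_toContinuousLinearMap']
    rfl
  have hfact : fG = fun q => L (fK q) := by
    funext q
    funext e
    rw [hLapp]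
    rfl
  have hdfact : ∀ q, fderiv ℝ fG q = L.comp (fderiv ℝ fK q) := by
    intro q
    rw [hfact]
    exact (L.hasFDerivAt.comp q (hCK.differentiable (by simp) q).hasFDerivAt).fderiv
  have hker_le : ∀ q, LinearMap.ker ((fderiv ℝ fK q : ↥(fixedSubspace n d M π) →ₗ[ℝ] ({x : Fin n × Fin n // x ∈ completeEdges n} → ℝ))) ≤ LinearMap.ker ((fderiv ℝ fG q : ↥(fixedSubspace n d M π) →ₗ[ℝ] ({x : Fin n × Fin n // x ∈ EG} → ℝ))) := by
    intro q v hv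
    rw [LinearMap.mem_ker, ContinuousLinearMap.coe_coe] at hv ⊢
    rw [hdfact q]
    show L (fderiv ℝ fK q v) = 0
    rw [hv, map_zero]
  have hrank_le : ∀ q, dRank fG q ≤ dRank fK q := by
    intro q
    rw [dRank_eq, dRank_eq, hdfact q, ContinuousLinearMap.toLinearMap_comp, LinearMap.range_comp]
    exact Submodule.finrank_map_le _ _
  -- the projected submersion g
  set RG : Submodule ℝ ({x : Fin n × Fin n // x ∈ EG} → ℝ) :=
    LinearMap.range ((fderiv ℝ fG p) : ↥(fixedSubspace n d M π) →ₗ[ℝ]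
      ({x : Fin n × Fin n // x ∈ EG} → ℝ)) with hRG
  obtain ⟨Wc, hWc⟩ := Submodule.exists_isCompl RG
  set P : ({x : Fin n × Fin n // x ∈ EG} → ℝ) →L[ℝ] ↥RG :=
    LinearMap.toContinuousLinearMap (RG.linearProjOfIsCompl Wc hWc) with hP
  have hPleft : ∀ (y : {x : Fin n × Fin n // x ∈ EG} → ℝ) (hy : y ∈ RG), P y = ⟨y, hy⟩ := by
    intro y hy
    simp only [hP, LinearMap.coe_toContinuousLinearMap']
    exact Submodule.linearProjOfIsCompl_apply_left hWc ⟨y, hy⟩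
  set g : ↥(fixedSubspace n d M π) → ↥RG := fun q => P (fG q) with hg
  have hCg : ContDiff ℝ ⊤ g := P.contDiff.comp hCG
  have hdg : ∀ q, fderiv ℝ g q = P.comp (fderiv ℝ fG q) := fun q =>
    (P.hasFDerivAt.comp q (hCG.differentiable (by simp) q).hasFDerivAt).fderiv
  have hsurjp : Function.Surjective (fderiv ℝ g p) := by
    intro z
    obtain ⟨v, hv⟩ := LinearMap.mem_range.1 z.2
    refine ⟨v, ?_⟩
    rw [hdg]
    show P (fderiv ℝ fG p v) = z
    have h6 : fderiv ℝ fG p v = (z : {x : Fin n × Fin n // x ∈ EG} → ℝ) := hv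
    rw [h6, hPleft _ z.2]
  have hkerg : ∀ q, LinearMap.ker ((fderiv ℝ fG q : ↥(fixedSubspace n d M π) →ₗ[ℝ] ({x : Fin n × Fin n // x ∈ EG} → ℝ))) ≤ LinearMap.ker ((fderiv ℝ g q : ↥(fixedSubspace n d M π) →ₗ[ℝ] ↥RG)) := by
    intro q v hv
    rw [LinearMap.mem_ker, ContinuousLinearMap.coe_coe] at hv ⊢
    rw [hdg q]
    show P (fderiv ℝ fG q v) = 0
    rw [hv, map_zero]
  have hkergp : LinearMap.ker ((fderiv ℝ g p : ↥(fixedSubspace n d M π) →ₗ[ℝ] ↥RG)) = LinearMap.ker ((fderiv ℝ fG p : ↥(fixedSubspace n d M π) →ₗ[ℝ] ({x : Fin n × Fin n // x ∈ EG} → ℝ))) := by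
    refine le_antisymm ?_ (hkerg p)
    intro v hv
    rw [LinearMap.mem_ker] at hv ⊢
    rw [hdg p] at hv
    have hv' : P (fderiv ℝ fG p v) = 0 := hv
    have hmem : fderiv ℝ fG p v ∈ RG := LinearMap.mem_range.2 ⟨v, rfl⟩
    rw [hPleft _ hmem] at hv'
    exact congrArg Subtype.val hv'
  -- ranks
  have hrkgp : finrank ℝ (LinearMap.range ((fderiv ℝ g p) :
      ↥(fixedSubspace n d M π) →ₗ[ℝ] ↥RG)) = finrank ℝ ↥RG := by
    have h0 : LinearMap.range ((fderiv ℝ g p) : ↥(fixedSubspace n d M π) →ₗ[ℝ] ↥RG) = ⊤ :=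
      LinearMap.range_eq_top.2 hsurjp
    rw [h0, finrank_top]
  have hrGRG : dRank fG p = finrank ℝ ↥RG := by
    rw [dRank_eq, hRG]
  -- continuity of the family of derivatives of g
  have hTcont : Continuous fun q => fderiv ℝ g q := hCg.continuous_fderiv (by simp)
  -- eventually, fderiv g q is surjective with full rank
  have hev_surj : ∀ᶠ q in 𝓝 p, Function.Surjective (fderiv ℝ g q) ∧
      finrank ℝ (LinearMap.range ((fderiv ℝ g q) : ↥(fixedSubspace n d M π) →ₗ[ℝ] ↥RG)) =
        finrank ℝ ↥RG := by
    filter_upwards [aux_rank_lsc _ hTcont p] with q hq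
    rw [hrkgp] at hq
    have hle : finrank ℝ (LinearMap.range ((fderiv ℝ g q) :
        ↥(fixedSubspace n d M π) →ₗ[ℝ] ↥RG)) ≤ finrank ℝ ↥RG :=
      (LinearMap.range ((fderiv ℝ g q) : ↥(fixedSubspace n d M π) →ₗ[ℝ] ↥RG)).finrank_le
    have heq : finrank ℝ (LinearMap.range ((fderiv ℝ g q) :
        ↥(fixedSubspace n d M π) →ₗ[ℝ] ↥RG)) = finrank ℝ ↥RG :=
      le_antisymm hle hq
    refine ⟨?_, heq⟩
    have h7 : LinearMap.range ((fderiv ℝ g q) : ↥(fixedSubspace n d M π) →ₗ[ℝ] ↥RG) = ⊤ :=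
      Submodule.eq_top_of_finrank_eq heq
    exact LinearMap.range_eq_top.1 h7
  refine ⟨hrank_le p, ?_, ?_⟩
  · -- equality of ranks implies the level sets agree locally
    intro hEq
    obtain ⟨U₂, hU₂, hU₂reg⟩ := hregK
    have hev : ∀ᶠ q in 𝓝 p, Function.Surjective (fderiv ℝ g q) ∧
        LinearMap.ker ((fderiv ℝ g q : ↥(fixedSubspace n d M π) →ₗ[ℝ] ↥RG)) ≤ LinearMap.ker ((fderiv ℝ fK q : ↥(fixedSubspace n d M π) →ₗ[ℝ] ({x : Fin n × Fin n // x ∈ completeEdges n} → ℝ))) := by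
      have hU₂ev : ∀ᶠ q in 𝓝 p, q ∈ U₂ :=
        Filter.eventually_iff_exists_mem.2 ⟨U₂, hU₂, fun q hq => hq⟩
      filter_upwards [hev_surj, hU₂ev] with q hq1 hq2
      refine ⟨hq1.1, ?_⟩
      have e1 := LinearMap.finrank_range_add_finrank_ker
        ((fderiv ℝ g q : ↥(fixedSubspace n d M π) →ₗ[ℝ] ↥RG))
      have e2 := LinearMap.finrank_range_add_finrank_ker
        ((fderiv ℝ fK q : ↥(fixedSubspace n d M π) →ₗ[ℝ]
          ({x : Fin n × Fin n // x ∈ completeEdges n} → ℝ)))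
      rw [ker_coe_eq] at e1 e2
      have hrk : finrank ℝ (LinearMap.range ((fderiv ℝ fK q) :
          ↥(fixedSubspace n d M π) →ₗ[ℝ]
            ({x : Fin n × Fin n // x ∈ completeEdges n} → ℝ))) ≤ finrank ℝ ↥RG := by
        have h3 : dRank fK q ≤ dRank fK p := hU₂reg q hq2
        rw [← hEq, hrGRG, dRank_eq] at h3
        exact h3
      have hq12 := hq1.2
      have hsub : LinearMap.ker ((fderiv ℝ fK q : ↥(fixedSubspace n d M π) →ₗ[ℝ] ({x : Fin n × Fin n // x ∈ completeEdges n} → ℝ))) ≤ LinearMap.ker ((fderiv ℝ g q : ↥(fixedSubspace n d M π) →ₗ[ℝ] ↥RG)) :=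
        (hker_le q).trans (hkerg q)
      have heqk := Submodule.eq_of_le_of_finrank_le hsub (by omega)
      exact le_of_eq heqk.symm
    obtain ⟨⟨N₁, hN₁, hlev⟩, -⟩ := aux_key fK g hCK hCg p hev
    refine ⟨N₁, hN₁, fun q hq => ⟨fun h => ?_, fun h => ?_⟩⟩
    · rw [hfact]
      exact congrArg (⇑L) h
    · exact hlev q hq (congrArg (⇑P) h)
  · -- level sets agree locally implies equality of ranks
    rintro ⟨N, hN, hiff⟩
    obtain ⟨U₁, hU₁, hU₁reg⟩ := hregG
    have hev : ∀ᶠ q in 𝓝 p, Function.Surjective (fderiv ℝ g q) ∧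
        LinearMap.ker ((fderiv ℝ g q : ↥(fixedSubspace n d M π) →ₗ[ℝ] ↥RG)) ≤ LinearMap.ker ((fderiv ℝ fG q : ↥(fixedSubspace n d M π) →ₗ[ℝ] ({x : Fin n × Fin n // x ∈ EG} → ℝ))) := by
      have hU₁ev : ∀ᶠ q in 𝓝 p, q ∈ U₁ :=
        Filter.eventually_iff_exists_mem.2 ⟨U₁, hU₁, fun q hq => hq⟩
      filter_upwards [hev_surj, hU₁ev] with q hq1 hq2
      refine ⟨hq1.1, ?_⟩
      have e1 := LinearMap.finrank_range_add_finrank_ker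
        ((fderiv ℝ g q : ↥(fixedSubspace n d M π) →ₗ[ℝ] ↥RG))
      have e2 := LinearMap.finrank_range_add_finrank_ker
        ((fderiv ℝ fG q : ↥(fixedSubspace n d M π) →ₗ[ℝ]
          ({x : Fin n × Fin n // x ∈ EG} → ℝ)))
      rw [ker_coe_eq] at e1 e2
      have hrk : finrank ℝ (LinearMap.range ((fderiv ℝ fG q) :
          ↥(fixedSubspace n d M π) →ₗ[ℝ] ({x : Fin n × Fin n // x ∈ EG} → ℝ))) ≤
            finrank ℝ ↥RG := by
        have h3 : dRank fG q ≤ dRank fG p := hU₁reg q hq2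
        rw [hrGRG, dRank_eq] at h3
        exact h3
      have hq12 := hq1.2
      have hsub : LinearMap.ker ((fderiv ℝ fG q : ↥(fixedSubspace n d M π) →ₗ[ℝ] ({x : Fin n × Fin n // x ∈ EG} → ℝ))) ≤ LinearMap.ker ((fderiv ℝ g q : ↥(fixedSubspace n d M π) →ₗ[ℝ] ↥RG)) := hkerg q
      have heqk := Submodule.eq_of_le_of_finrank_le hsub (by omega)
      exact le_of_eq heqk.symm
    obtain ⟨⟨N₁, hN₁, hlev⟩, hcurve⟩ := aux_key fG g hCG hCg p hev
    have hkk : LinearMap.ker ((fderiv ℝ fG p : ↥(fixedSubspace n d M π) →ₗ[ℝ] ({x : Fin n × Fin n // x ∈ EG} → ℝ))) ≤ LinearMap.ker ((fderiv ℝ fK p : ↥(fixedSubspace n d M π) →ₗ[ℝ] ({x : Fin n × Fin n // x ∈ completeEdges n} → ℝ))) := by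
      intro v hv
      obtain ⟨γ, hγ0, hγd, hγg⟩ := hcurve v (by rw [hkergp]; exact hv)
      have hct : ContinuousAt γ 0 := hγd.continuousAt
      have h1 : ∀ᶠ t in 𝓝 (0:ℝ), γ t ∈ N₁ := hct.preimage_mem_nhds (by rw [hγ0]; exact hN₁)
      have h2 : ∀ᶠ t in 𝓝 (0:ℝ), γ t ∈ N := hct.preimage_mem_nhds (by rw [hγ0]; exact hN)
      have hevt : ∀ᶠ t in 𝓝 (0:ℝ), fK (γ t) = fK p := by
        filter_upwards [hγg, h1, h2] with t ht1 ht2 ht3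
        exact (hiff _ ht3).2 (hlev _ ht2 ht1)
      have hd1 : HasDerivAt (fun t => fK (γ t)) (fderiv ℝ fK p v) 0 := by
        have h4 := ((hCK.differentiable (by simp) (γ 0)).hasFDerivAt).comp_hasDerivAt 0 hγd
        rwa [hγ0] at h4
      have hd2 : HasDerivAt (fun t => fK (γ t)) 0 0 :=
        (hasDerivAt_const (0:ℝ) (fK p)).congr_of_eventuallyEq hevt
      have h5 := hd1.unique hd2
      rw [LinearMap.mem_ker]
      exact h5
    have hkk' : LinearMap.ker ((fderiv ℝ fK p : ↥(fixedSubspace n d M π) →ₗ[ℝ] ({x : Fin n × Fin n // x ∈ completeEdges n} → ℝ))) = LinearMap.ker ((fderiv ℝ fG p : ↥(fixedSubspace n d M π) →ₗ[ℝ] ({x : Fin n × Fin n // x ∈ EG} → ℝ))) :=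
      le_antisymm (hker_le p) hkk
    have e1 := LinearMap.finrank_range_add_finrank_ker
      ((fderiv ℝ fG p : ↥(fixedSubspace n d M π) →ₗ[ℝ]
        ({x : Fin n × Fin n // x ∈ EG} → ℝ)))
    have e2 := LinearMap.finrank_range_add_finrank_ker
      ((fderiv ℝ fK p : ↥(fixedSubspace n d M π) →ₗ[ℝ]
        ({x : Fin n × Fin n // x ∈ completeEdges n} → ℝ)))
    rw [ker_coe_eq] at e1 e2
    have hkreq : finrank ℝ (LinearMap.ker ((fderiv ℝ fK p : ↥(fixedSubspace n d M π) →ₗ[ℝ] ({x : Fin n × Fin n // x ∈ completeEdges n} → ℝ)))) =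
        finrank ℝ (LinearMap.ker ((fderiv ℝ fG p : ↥(fixedSubspace n d M π) →ₗ[ℝ] ({x : Fin n × Fin n // x ∈ EG} → ℝ)))) := by rw [hkk']
    rw [dRank_eq, dRank_eq]
    omega
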